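/- Let k ≠ 0, b, r be real constants and set m = 1 + (b+1)/k, n = 1/k², l = b(r−1)/k², t = b(k+1)/k², s = 1 + 1/k. Let Y : J → ℝ be twice differentiable on an open interval J with x ≠ 0 and Y(x) ≠ x for all x ∈ J, and suppose Y satisfies k·(Y − x)·Y'' + k·Y'² − (1/x)·(k·Y − (b+1)·x)·Y' − Y/x + (x²·Y + b·(Y − r·x))/(k·(Y − x)) = 0 on J. Then the function V(x) = 1/(Y(x) − x) is twice differentiable and satisfies on J: V'' = (3/V)·V'² + (1/x − m·V)·V' + (n·x³ − l·x)·V⁴ + (n·x² + t)·V³ − (s/x)·V². -/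

import Mathlib

/-- the point transformation `v = 1/(y − x)` carries the second-order
equation obtained from the Lorenz system into
`v'' = (3/v)v'² + (1/x − mv)v' + (nx³ − lx)v⁴ + (nx² + t)v³ − (s/x)v²`,
with `m = 1+(b+1)/k`, `n = 1/k²`, `l = b(r−1)/k²`, `t = b(k+1)/k²`, `s = 1+1/k`. -/
theorem stmt_18 (k b r m n l t s : ℝ) (hk : k ≠ 0)
    (hm : m = 1 + (b + 1) / k) (hn : n = 1 / k ^ 2) (hl : l = b * (r - 1) / k ^ 2)
    (ht : t = b * (k + 1) / k ^ 2) (hs : s = 1 + 1 / k)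
    (J : Set ℝ) (hJ : IsOpen J) (hJint : J.OrdConnected)
    (Y : ℝ → ℝ)
    (hY1 : ∀ x ∈ J, DifferentiableAt ℝ Y x)
    (hY2 : ∀ x ∈ J, DifferentiableAt ℝ (deriv Y) x)
    (hx0 : ∀ x ∈ J, x ≠ 0) (hYx : ∀ x ∈ J, Y x ≠ x)
    (hode : ∀ x ∈ J,
      k * (Y x - x) * deriv (deriv Y) x + k * (deriv Y x) ^ 2
        - (1 / x) * (k * Y x - (b + 1) * x) * deriv Y x - Y x / x
        + (x ^ 2 * Y x + b * (Y x - r * x)) / (k * (Y x - x)) = 0)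
    (V : ℝ → ℝ) (hV : ∀ x : ℝ, V x = 1 / (Y x - x)) :
    (∀ x ∈ J, DifferentiableAt ℝ V x ∧ DifferentiableAt ℝ (deriv V) x) ∧
    ∀ x ∈ J,
      deriv (deriv V) x
        = (3 / V x) * (deriv V x) ^ 2 + (1 / x - m * V x) * deriv V x
          + (n * x ^ 3 - l * x) * V x ^ 4 + (n * x ^ 2 + t) * V x ^ 3
          - (s / x) * V x ^ 2 := by
  have hVeq : V = fun x => (Y x - x)⁻¹ := funext fun x => by rw [hV]; exact one_div _
  have hw : ∀ x ∈ J, Y x - x ≠ 0 := fun x hx => sub_ne_zero.mpr (hYx x hx)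
  -- derivative of V on J
  have hVd : ∀ x ∈ J, HasDerivAt V (-(deriv Y x - 1) / (Y x - x) ^ 2) x := by
    intro x hx
    have hW : HasDerivAt (fun x => Y x - x) (deriv Y x - 1) x :=
      ((hY1 x hx).hasDerivAt).sub (hasDerivAt_id x)
    rw [hVeq]
    exact hW.inv (hw x hx)
  have hderivV : ∀ x ∈ J, deriv V x = -(deriv Y x - 1) / (Y x - x) ^ 2 :=
    fun x hx => (hVd x hx).deriv
  -- second derivative of V on J
  set g : ℝ → ℝ := fun x => -(deriv Y x - 1) / (Y x - x) ^ 2 with hg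
  have hgd : ∀ x ∈ J, HasDerivAt g
      ((-(deriv (deriv Y) x) * (Y x - x) ^ 2
        - (-(deriv Y x - 1)) * (2 * (Y x - x) * (deriv Y x - 1))) / ((Y x - x) ^ 2) ^ 2) x := by
    intro x hx
    have hN : HasDerivAt (fun x => -(deriv Y x - 1)) (-(deriv (deriv Y) x)) x := by
      simpa using (((hY2 x hx).hasDerivAt).sub_const 1).fun_neg
    have hW : HasDerivAt (fun x => Y x - x) (deriv Y x - 1) x :=
      ((hY1 x hx).hasDerivAt).sub (hasDerivAt_id x)
    have hD : HasDerivAt (fun x => (Y x - x) ^ 2) (2 * (Y x - x) * (deriv Y x - 1)) x := by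
      simpa [mul_comm, mul_assoc, mul_left_comm] using hW.fun_pow 2
    exact hN.div hD (pow_ne_zero 2 (hw x hx))
  have hev : ∀ x ∈ J, deriv V =ᶠ[nhds x] g := by
    intro x hx
    filter_upwards [hJ.mem_nhds hx] with y hy
    exact hderivV y hy
  have hVd2 : ∀ x ∈ J, HasDerivAt (deriv V)
      ((-(deriv (deriv Y) x) * (Y x - x) ^ 2
        - (-(deriv Y x - 1)) * (2 * (Y x - x) * (deriv Y x - 1))) / ((Y x - x) ^ 2) ^ 2) x :=
    fun x hx => (hgd x hx).congr_of_eventuallyEq (hev x hx)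
  refine ⟨fun x hx => ⟨(hVd x hx).differentiableAt, (hVd2 x hx).differentiableAt⟩, ?_⟩
  intro x hx
  have hwx := hw x hx
  have hxx := hx0 x hx
  have h := hode x hx
  -- solve for Y'' from the ODE
  have hy2 : deriv (deriv Y) x =
      (-(k * (deriv Y x) ^ 2) + (1 / x) * (k * Y x - (b + 1) * x) * deriv Y x + Y x / x
        - (x ^ 2 * Y x + b * (Y x - r * x)) / (k * (Y x - x))) / (k * (Y x - x)) := by
    field_simp at h ⊢
    linarith [h]
  rw [(hVd2 x hx).deriv, hderivV x hx, hV, hy2, hm, hn, hl, ht, hs]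
  field_simp
  ring
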